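/- Let λ > 0 and let ρ be a σ-finite Borel measure on ℝ. Then ∫₀^∞ e^{−λs} ( ∫_{\{β : 1 ≤ |β| ≤ e^{λs}\}} |β| ρ(dβ) ) ds = (1/λ) ρ( \{β : |β| ≥ 1\} ), where both sides are allowed to take the value +∞. -/

import Mathlib

open MeasureTheory Filter Topology
open scoped ENNReal

lemma aux_exp_lintegral (l : ℝ) (hl : 0 < l) (a : ℝ) :
    ∫⁻ s in Set.Ioi a, ENNReal.ofReal (Real.exp (-(l * s)))
      = ENNReal.ofReal (Real.exp (-(l * a)) / l) := by
  have hint : MeasureTheory.IntegrableOn (fun x : ℝ => Real.exp (-(l * x))) (Set.Ioi a) := by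
    simpa [neg_mul] using exp_neg_integrableOn_Ioi a hl
  rw [← MeasureTheory.ofReal_integral_eq_lintegral_ofReal hint
    (Filter.Eventually.of_forall fun x => (Real.exp_pos _).le)]
  congr 1
  have := MeasureTheory.integral_comp_mul_left_Ioi (fun x => Real.exp (-x)) a hl
  simp only [smul_eq_mul] at this
  rw [this, integral_exp_neg_Ioi]
  field_simp

/-- For `λ > 0` and a σ-finite Borel measure `ρ` on `ℝ`:
`∫₀^∞ e^{-λs} (∫_{1 ≤ |β| ≤ e^{λs}} |β| ρ(dβ)) ds = (1/λ) ρ({β : |β| ≥ 1})`,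
where both sides may be `+∞`. -/
theorem stmt18
    (l : ℝ) (hl : 0 < l) (ρ : Measure ℝ) [SigmaFinite ρ] :
    (∫⁻ s in Set.Ioi (0 : ℝ), ENNReal.ofReal (Real.exp (-(l * s)))
        * ∫⁻ β in {β : ℝ | 1 ≤ |β| ∧ |β| ≤ Real.exp (l * s)}, ENNReal.ofReal |β| ∂ρ)
      = ENNReal.ofReal (1 / l) * ρ {β : ℝ | 1 ≤ |β|} := by
  set T : Set (ℝ × ℝ) := {p | 1 ≤ |p.2| ∧ |p.2| ≤ Real.exp (l * p.1)} with hT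
  have hTmeas : MeasurableSet T := by
    apply MeasurableSet.inter
    · exact measurableSet_le measurable_const (measurable_snd.abs)
    · exact measurableSet_le (measurable_snd.abs)
        ((measurable_fst.const_mul l).exp)
  set g : ℝ × ℝ → ℝ≥0∞ := fun p => ENNReal.ofReal (Real.exp (-(l * p.1)) * |p.2|) with hg
  have hgmeas : Measurable g := by
    apply Measurable.ennreal_ofReal
    exact (((measurable_fst.const_mul l).neg).exp).mul (measurable_snd.abs)
  set f : ℝ → ℝ → ℝ≥0∞ := fun s β => T.indicator g (s, β) with hf
  have hufmeas : Measurable (Function.uncurry f) := by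
    have : Function.uncurry f = T.indicator g := by
      funext p; rfl
    rw [this]
    exact hgmeas.indicator hTmeas
  have hSmeas : ∀ s : ℝ, MeasurableSet {β : ℝ | 1 ≤ |β| ∧ |β| ≤ Real.exp (l * s)} := by
    intro s
    apply MeasurableSet.inter
    · exact measurableSet_le measurable_const measurable_abs
    · exact measurableSet_le measurable_abs measurable_const
  -- step 1: rewrite LHS as double integral of f
  have step1 : (∫⁻ s in Set.Ioi (0 : ℝ), ENNReal.ofReal (Real.exp (-(l * s)))
        * ∫⁻ β in {β : ℝ | 1 ≤ |β| ∧ |β| ≤ Real.exp (l * s)}, ENNReal.ofReal |β| ∂ρ)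
      = ∫⁻ s in Set.Ioi (0 : ℝ), ∫⁻ β, f s β ∂ρ := by
    apply lintegral_congr
    intro s
    rw [← MeasureTheory.lintegral_const_mul _ (measurable_abs.ennreal_ofReal)]
    rw [← MeasureTheory.lintegral_indicator (hSmeas s) _]
    apply lintegral_congr
    intro β
    by_cases hβ : 1 ≤ |β| ∧ |β| ≤ Real.exp (l * s)
    · have h1 : (s, β) ∈ T := hβ
      have h2 : β ∈ {β : ℝ | 1 ≤ |β| ∧ |β| ≤ Real.exp (l * s)} := hβ
      simp only [hf, hg, Set.indicator_of_mem h1, Set.indicator_of_mem h2,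
        ENNReal.ofReal_mul (Real.exp_pos _).le]
    · have h1 : (s, β) ∉ T := hβ
      have h2 : β ∉ {β : ℝ | 1 ≤ |β| ∧ |β| ≤ Real.exp (l * s)} := hβ
      simp only [hf, Set.indicator_of_notMem h1, Set.indicator_of_notMem h2]
  rw [step1]
  -- step 2: Tonelli
  rw [MeasureTheory.lintegral_lintegral_swap (hufmeas.aemeasurable)]
  -- step 3: compute inner integral
  have step3 : ∀ β : ℝ, (∫⁻ s in Set.Ioi (0 : ℝ), f s β)
      = {β : ℝ | 1 ≤ |β|}.indicator (fun _ => ENNReal.ofReal (1 / l)) β := by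
    intro β
    by_cases hβ : 1 ≤ |β|
    · have hβpos : (0 : ℝ) < |β| := lt_of_lt_of_le zero_lt_one hβ
      set a : ℝ := Real.log |β| / l with ha
      have ha0 : 0 ≤ a := div_nonneg (Real.log_nonneg hβ) hl.le
      have hla : l * a = Real.log |β| := by
        rw [ha, mul_div_assoc', mul_div_cancel_left₀ _ hl.ne']
      have hfs : ∀ s : ℝ, f s β
          = (Set.Ici a).indicator (fun s => ENNReal.ofReal (Real.exp (-(l * s)) * |β|)) s := by
        intro s
        have hmem : (s, β) ∈ T ↔ s ∈ Set.Ici a := by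
          simp only [hT, Set.mem_setOf_eq, Set.mem_Ici]
          rw [← Real.log_le_iff_le_exp hβpos]
          constructor
          · rintro ⟨-, h⟩
            rw [ha, div_le_iff₀ hl]
            linarith [h]
          · intro h
            refine ⟨hβ, ?_⟩
            rw [ha, div_le_iff₀ hl] at h
            linarith [h]
        by_cases hs : s ∈ Set.Ici a
        · rw [Set.indicator_of_mem hs]
          exact Set.indicator_of_mem (hmem.mpr hs) g
        · rw [Set.indicator_of_notMem hs]
          exact Set.indicator_of_notMem (fun h => hs (hmem.mp h)) g
      simp only [hfs]
      rw [MeasureTheory.lintegral_indicator measurableSet_Ici _,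
        MeasureTheory.Measure.restrict_restrict measurableSet_Ici]
      have hae : (Set.Ici a ∩ Set.Ioi 0 : Set ℝ) =ᵐ[volume] Set.Ioi a := by
        apply MeasureTheory.ae_eq_set.mpr
        constructor
        · have : (Set.Ici a ∩ Set.Ioi (0 : ℝ)) \ Set.Ioi a ⊆ ({a} : Set ℝ) := by
            rintro x ⟨⟨h1, h2⟩, h3⟩
            simp only [Set.mem_Ici, Set.mem_Ioi, not_lt] at *
            simp only [Set.mem_singleton_iff]
            linarith
          exact measure_mono_null this (measure_singleton a)
        · have hsub : Set.Ioi a ⊆ Set.Ici a ∩ Set.Ioi 0 :=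
            fun x hx => ⟨Set.mem_Ici.mpr (le_of_lt (Set.mem_Ioi.mp hx)),
              Set.mem_Ioi.mpr (lt_of_le_of_lt ha0 (Set.mem_Ioi.mp hx))⟩
          rw [Set.diff_eq_empty.mpr hsub]; exact measure_empty
      rw [MeasureTheory.Measure.restrict_congr_set hae]
      have : (∫⁻ s in Set.Ioi a, ENNReal.ofReal (Real.exp (-(l * s)) * |β|))
          = (∫⁻ s in Set.Ioi a, ENNReal.ofReal (Real.exp (-(l * s)))) * ENNReal.ofReal |β| := by
        rw [← MeasureTheory.lintegral_mul_const' (ENNReal.ofReal |β|) _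
          ENNReal.ofReal_ne_top]
        apply lintegral_congr
        intro s
        rw [ENNReal.ofReal_mul (Real.exp_pos _).le]
      rw [this, aux_exp_lintegral l hl a,
        Set.indicator_of_mem (show β ∈ {β : ℝ | 1 ≤ |β|} from hβ),
        ← ENNReal.ofReal_mul (by positivity)]
      congr 1
      rw [hla, Real.exp_neg, Real.exp_log hβpos]
      field_simp
    · have hz : ∀ s : ℝ, f s β = 0 := by
        intro s
        apply Set.indicator_of_notMem
        intro h
        exact hβ h.1
      simp only [hz, lintegral_zero, Set.indicator_of_notMem (by exact hβ :
        β ∉ {β : ℝ | 1 ≤ |β|})]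
  simp only [step3]
  rw [MeasureTheory.lintegral_indicator
    (measurableSet_le measurable_const measurable_abs) _,
    MeasureTheory.setLIntegral_const]
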